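/- Let H be a complex Hilbert space, let P and Q be orthogonal projections on H (bounded, self-adjoint, idempotent), let t > 0, and let R denote the orthogonal projection onto the closed subspace (range P) ∩ (range Q). Then for every ξ ∈ H: inf_{ζ ∈ H} ( t·‖P ζ‖² + ‖Q(ξ − ζ)‖² ) = ( t / (t + 1) ) · ‖R ξ‖². -/

import Mathlib

open scoped InnerProductSpace
open Filter

namespace BSPaper

/-- Parallel sum of two scaled projections: if `P, Q` are orthogonal
projections on a complex Hilbert space, `R` is the orthogonal projection onto
`range P ∩ range Q`, and `t > 0`, then for every `ξ`,
`inf_ζ ( t‖Pζ‖² + ‖Q(ξ−ζ)‖² ) = (t/(t+1))·‖Rξ‖²`, i.e. `(tP):Q = (t/(t+1))·(P ∧ Q)`. -/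
theorem projection_parallel_sum {H : Type*} [NormedAddCommGroup H]
    [InnerProductSpace ℂ H] [CompleteSpace H]
    (P Q R : H →L[ℂ] H)
    (hPsa : IsSelfAdjoint P) (hP : P * P = P)
    (hQsa : IsSelfAdjoint Q) (hQ : Q * Q = Q)
    (hRsa : IsSelfAdjoint R) (hR : R * R = R)
    (hRrange : Set.range R = Set.range P ∩ Set.range Q)
    (t : ℝ) (ht : 0 < t) (ξ : H) :
    (⨅ ζ : H, (t * ‖P ζ‖ ^ 2 + ‖Q (ξ - ζ)‖ ^ 2)) = (t / (t + 1)) * ‖R ξ‖ ^ 2 := by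
  have ht1 : (0:ℝ) < t + 1 := by linarith
  -- inner product self-adjointness helpers
  have hPinner : ∀ x y : H, ⟪P x, y⟫_ℂ = ⟪x, P y⟫_ℂ := fun x y => by
    rw [← ContinuousLinearMap.isSelfAdjoint_iff'.mp hPsa,
      ContinuousLinearMap.adjoint_inner_left,
      ContinuousLinearMap.isSelfAdjoint_iff'.mp hPsa]
  have hQinner : ∀ x y : H, ⟪Q x, y⟫_ℂ = ⟪x, Q y⟫_ℂ := fun x y => by
    rw [← ContinuousLinearMap.isSelfAdjoint_iff'.mp hQsa,
      ContinuousLinearMap.adjoint_inner_left,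
      ContinuousLinearMap.isSelfAdjoint_iff'.mp hQsa]
  have hRinner : ∀ x y : H, ⟪R x, y⟫_ℂ = ⟪x, R y⟫_ℂ := fun x y => by
    rw [← ContinuousLinearMap.isSelfAdjoint_iff'.mp hRsa,
      ContinuousLinearMap.adjoint_inner_left,
      ContinuousLinearMap.isSelfAdjoint_iff'.mp hRsa]
  -- idempotency pointwise
  have hPP : ∀ x : H, P (P x) = P x := fun x => by
    have := congrFun (congrArg DFunLike.coe hP) x; simpa using this
  have hQQ : ∀ x : H, Q (Q x) = Q x := fun x => by
    have := congrFun (congrArg DFunLike.coe hQ) x; simpa using this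
  have hRR : ∀ x : H, R (R x) = R x := fun x => by
    have := congrFun (congrArg DFunLike.coe hR) x; simpa using this
  -- P fixes range R, Q fixes range R
  have hPR : ∀ x : H, P (R x) = R x := by
    intro x
    have hx : R x ∈ Set.range P ∩ Set.range Q := by
      rw [← hRrange]; exact ⟨x, rfl⟩
    obtain ⟨y, hy⟩ := hx.1
    rw [← hy, hPP]
  have hQR : ∀ x : H, Q (R x) = R x := by
    intro x
    have hx : R x ∈ Set.range P ∩ Set.range Q := by
      rw [← hRrange]; exact ⟨x, rfl⟩
    obtain ⟨y, hy⟩ := hx.2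
    rw [← hy, hQQ]
  -- R ∘ Q = R  (adjoint of Q ∘ R = R)
  have hRQop : R * Q = R := by
    have h1 : Q * R = R := by ext x; exact hQR x
    calc R * Q = star (Q * R) := by
          rw [star_mul, hQsa.star_eq, hRsa.star_eq]
      _ = star R := by rw [h1]
      _ = R := hRsa.star_eq
  have hRQ : ∀ x : H, R (Q x) = R x := fun x => by
    have := congrFun (congrArg DFunLike.coe hRQop) x; simpa using this
  set r : ℝ := ‖R ξ‖ with hr
  have hr0 : 0 ≤ r := norm_nonneg _
  -- the function
  set f : H → ℝ := fun ζ => t * ‖P ζ‖ ^ 2 + ‖Q (ξ - ζ)‖ ^ 2 with hf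
  have hbdd : BddBelow (Set.range f) := by
    refine ⟨0, ?_⟩
    rintro _ ⟨ζ, rfl⟩
    have : (0:ℝ) ≤ t * ‖P ζ‖ ^ 2 + ‖Q (ξ - ζ)‖ ^ 2 := by positivity
    simpa [hf] using this
  -- lower bound
  have lower : ∀ ζ : H, t / (t + 1) * r ^ 2 ≤ f ζ := by
    intro ζ
    set a : ℝ := ‖P ζ‖ with ha
    set b : ℝ := ‖Q (ξ - ζ)‖ with hb
    have ha0 : 0 ≤ a := norm_nonneg _
    have hb0 : 0 ≤ b := norm_nonneg _
    -- r^2 ≤ r*a + r*b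
    have key : r ^ 2 ≤ r * a + r * b := by
      have e1 : (⟪R ξ, R ξ⟫_ℂ : ℂ) = ⟪R ξ, ζ⟫_ℂ + ⟪R ξ, ξ - ζ⟫_ℂ := by
        rw [← inner_add_right]
        have : ζ + (ξ - ζ) = ξ := by abel
        rw [this]
        calc ⟪R ξ, R ξ⟫_ℂ = ⟪R (R ξ), ξ⟫_ℂ := by rw [hRinner (R ξ) ξ]
          _ = ⟪R ξ, ξ⟫_ℂ := by rw [hRR]
      have e2 : (⟪R ξ, ζ⟫_ℂ : ℂ) = ⟪R ξ, P ζ⟫_ℂ := by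
        conv_lhs => rw [← hPR ξ]
        rw [hPinner]
      have e3 : (⟪R ξ, ξ - ζ⟫_ℂ : ℂ) = ⟪R ξ, Q (ξ - ζ)⟫_ℂ := by
        conv_lhs => rw [← hQR ξ]
        rw [hQinner]
      have hnorm : r ^ 2 = RCLike.re ⟪R ξ, R ξ⟫_ℂ := by
        rw [hr, ← inner_self_eq_norm_sq (𝕜 := ℂ)]
      rw [hnorm, e1, e2, e3, map_add]
      have c1 : RCLike.re ⟪R ξ, P ζ⟫_ℂ ≤ r * a := re_inner_le_norm (𝕜 := ℂ) _ _
      have c2 : RCLike.re ⟪R ξ, Q (ξ - ζ)⟫_ℂ ≤ r * b := re_inner_le_norm (𝕜 := ℂ) _ _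
      linarith
    have hfz : f ζ = t * a ^ 2 + b ^ 2 := rfl
    rw [hfz, div_mul_eq_mul_div, div_le_iff₀ ht1]
    have hs : r ^ 2 ≤ (a + b) ^ 2 := by nlinarith [sq_nonneg (a + b - r), key]
    nlinarith [sq_nonneg (t * a - b), mul_le_mul_of_nonneg_left hs ht.le]
  -- density: Qξ - Rξ ∈ closure of Q '' ker P
  have upper : ∀ ε : ℝ, 0 < ε → ∃ ζ : H, f ζ ≤ t / (t + 1) * r ^ 2 + ε := by
    intro ε hε
    -- the submodule K = Q(ker P)
    set K : Submodule ℂ H :=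
      Submodule.map (Q : H →ₗ[ℂ] H) (LinearMap.ker (P : H →ₗ[ℂ] H)) with hK
    have hmem : (Q ξ - R ξ) ∈ K.topologicalClosure := by
      rw [← Submodule.orthogonal_orthogonal_eq_closure]
      intro v hv
      -- v ⊥ K; show Q v ∈ range P, hence Q v fixed by R
      have hv' : ∀ w : H, P w = 0 → ⟪Q w, v⟫_ℂ = 0 := by
        intro w hw
        exact hv (Q w) ⟨w, by simpa using hw, rfl⟩
      have hPQv : P (Q v) = Q v := by
        set w : H := Q v - P (Q v) with hw
        have hPw : P w = 0 := by
          rw [hw, map_sub, hPP, sub_self]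
        have h0 : (⟪Q w, v⟫_ℂ : ℂ) = 0 := hv' w hPw
        have h1 : (⟪w, Q v⟫_ℂ : ℂ) = 0 := by
          rw [← hQinner]; exact h0
        have h2 : (⟪w, w⟫_ℂ : ℂ) = 0 := by
          have hsplit : (⟪w, Q v⟫_ℂ : ℂ) = ⟪w, P (Q v)⟫_ℂ + ⟪w, w⟫_ℂ := by
            rw [← inner_add_right]
            congr 1
            rw [hw]; abel
          have h3 : (⟪w, P (Q v)⟫_ℂ : ℂ) = 0 := by
            rw [← hPinner, hPw, inner_zero_left]
          rw [hsplit, h3, zero_add] at h1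
          exact h1
        have : w = 0 := by
          have := inner_self_eq_zero (𝕜 := ℂ) (x := w)
          exact this.mp h2
        rw [hw] at this
        have := sub_eq_zero.mp this
        exact this.symm
      have hQvR : R (Q v) = Q v := by
        have hx : Q v ∈ Set.range R := by
          rw [hRrange]
          exact ⟨⟨Q v, hPQv⟩, ⟨v, rfl⟩⟩
        obtain ⟨y, hy⟩ := hx
        rw [← hy, hRR]
      -- now ⟪v, Qξ - Rξ⟫ = 0
      have hvq : (⟪v, Q ξ⟫_ℂ : ℂ) = ⟪Q v, ξ⟫_ℂ := by rw [hQinner]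
      have hvr : (⟪v, R ξ⟫_ℂ : ℂ) = ⟪Q v, ξ⟫_ℂ := by
        rw [← hRinner]
        have : R v = Q v := by
          calc R v = R (Q v) := (hRQ v).symm
            _ = Q v := hQvR
        rw [this]
      rw [inner_sub_right, hvq, hvr, sub_self]
    -- choose approximation
    set k : ℝ := t / (t + 1) * r with hk
    have hk0 : 0 ≤ k := by positivity
    set δ : ℝ := min 1 (ε / (2 * k + 1)) with hδ
    have hδpos : 0 < δ := by
      apply lt_min one_pos
      positivity
    have hδ1 : δ ≤ 1 := min_le_left _ _
    have hδε : (2 * k + 1) * δ ≤ ε := by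
      have h2 : δ ≤ ε / (2 * k + 1) := min_le_right _ _
      have h3 : (0:ℝ) < 2 * k + 1 := by linarith
      calc (2 * k + 1) * δ ≤ (2 * k + 1) * (ε / (2 * k + 1)) := by
            exact mul_le_mul_of_nonneg_left h2 (le_of_lt h3)
        _ = ε := by field_simp
    obtain ⟨u, huK, hu⟩ : ∃ u ∈ (K : Set H), ‖(Q ξ - R ξ) - u‖ < δ := by
      have := Metric.mem_closure_iff.mp
        (show Q ξ - R ξ ∈ closure (K : Set H) by
          rw [← Submodule.topologicalClosure_coe]; exact hmem) δ hδpos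
      obtain ⟨u, huK, hdu⟩ := this
      exact ⟨u, huK, by simpa [dist_eq_norm] using hdu⟩
    obtain ⟨w, hwker, hwQ⟩ := huK
    have hPw : P w = 0 := by simpa using hwker
    -- the candidate
    set ζ : H := ((1 : ℝ) / (t + 1)) • R ξ + w with hζ
    have hPζ : P ζ = ((1 : ℝ) / (t + 1)) • R ξ := by
      rw [hζ, map_add, ContinuousLinearMap.map_smul_of_tower, hPR, hPw, add_zero]
    have hQζ : Q (ξ - ζ) = (t / (t + 1)) • R ξ + ((Q ξ - R ξ) - Q w) := by
      rw [hζ, map_sub, map_add, ContinuousLinearMap.map_smul_of_tower, hQR]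
      have : (t / (t + 1) : ℝ) = 1 - 1 / (t + 1) := by field_simp; ring
      rw [this, sub_smul, one_smul]
      abel
    have hnPζ : ‖P ζ‖ = 1 / (t + 1) * r := by
      rw [hPζ, norm_smul, Real.norm_eq_abs, abs_of_pos (by positivity), hr]
    have hnQζ : ‖Q (ξ - ζ)‖ ≤ k + δ := by
      rw [hQζ]
      calc ‖(t / (t + 1) : ℝ) • R ξ + ((Q ξ - R ξ) - Q w)‖
          ≤ ‖(t / (t + 1) : ℝ) • R ξ‖ + ‖(Q ξ - R ξ) - Q w‖ := norm_add_le _ _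
        _ ≤ k + δ := by
            rw [norm_smul, Real.norm_eq_abs, abs_of_pos (by positivity)]
            have : ‖(Q ξ - R ξ) - Q w‖ < δ := by rw [← hwQ] at hu; exact hu
            rw [hk, hr]
            linarith
    refine ⟨ζ, ?_⟩
    have hQ0 : (0:ℝ) ≤ ‖Q (ξ - ζ)‖ := norm_nonneg _
    have hsq : ‖Q (ξ - ζ)‖ ^ 2 ≤ (k + δ) ^ 2 := by
      apply pow_le_pow_left₀ hQ0 hnQζ
    have hfv : f ζ = t * ‖P ζ‖ ^ 2 + ‖Q (ξ - ζ)‖ ^ 2 := rfl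
    rw [hfv, hnPζ]
    have hid : t * (1 / (t + 1) * r) ^ 2 + (k + δ) ^ 2
        = t / (t + 1) * r ^ 2 + (2 * k * δ + δ ^ 2) := by
      rw [hk]
      field_simp
      ring
    have hfinal : 2 * k * δ + δ ^ 2 ≤ ε := by
      have : δ ^ 2 ≤ δ := by nlinarith [hδpos, hδ1]
      linarith
    linarith [hsq, hid.le, hid.ge, hfinal]
  -- conclude
  apply le_antisymm
  · apply le_of_forall_sub_le
    intro ε hε
    obtain ⟨ζ, hζ⟩ := upper ε hε
    have h1 : (⨅ ζ : H, f ζ) ≤ f ζ := ciInf_le hbdd ζ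
    have : (⨅ ζ : H, f ζ) ≤ t / (t + 1) * r ^ 2 + ε := le_trans h1 hζ
    linarith
  · exact le_ciInf lower

end BSPaper
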